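/- Let f : ℝ^n → ℝ be differentiable with gradient ∇f, attain its minimum value f* at a unique minimizer x*, and satisfy the PL inequality (1/2)‖∇f(x)‖² ≥ μ(f(x) − f*) for all x, with μ > 0. Let c1, c2 > 0, p1 > 2, p2 ∈ (1,2) with p2 ≠ 4/3, and set α := p1/(2(p1−1)), β := p2/(2(p2−1)), p := c1(2μ)^α, q := c2(2μ)^β. Let x : ℝ → ℝ^n be a differentiable solution of the FxTS-GF dynamics with V0 := f(x(0)) − f* > 0, and define l1 := 1/(p(2−α)) and l2 := ((1 + V0^(β−1))^((β−2)/(β−1)) − 1)/(q·V0^(β−2)·(β−2)). Then the static regret satisfies ∫₀^T (f(x(t)) − f*) dt ≤ l1 + l2 for every T ≥ 0. -/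

import Mathlib

open Classical

open MeasureTheory intervalIntegral in
private lemma int_le_of_potential {F e V : ℝ → ℝ} {s T : ℝ} (hsT : s ≤ T)
    (hF : ∀ t ∈ Set.Icc s T, HasDerivAt F (e t) t)
    (hVc : ∀ t ∈ Set.Icc s T, ContinuousAt V t)
    (he : ∀ t ∈ Set.Icc s T, e t ≤ - V t) :
    (∫ t in s..T, V t) ≤ F s - F T := by
  have hVcon : ContinuousOn V (Set.Icc s T) := fun u hu => (hVc u hu).continuousWithinAt
  have hVintT : IntervalIntegrable V volume s T := by
    apply ContinuousOn.intervalIntegrable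
    rwa [Set.uIcc_of_le hsT]
  have hVint : ∀ t ∈ Set.Icc s T, IntervalIntegrable V volume s t := by
    intro t ht
    refine hVintT.mono_set ?_
    rw [Set.uIcc_of_le ht.1, Set.uIcc_of_le hsT]
    exact Set.Icc_subset_Icc_right ht.2
  set Ψ : ℝ → ℝ := fun t => F t + ∫ u in s..t, V u with hΨ
  have hΨc : ContinuousOn Ψ (Set.Icc s T) := by
    apply ContinuousOn.add (fun t ht => ((hF t ht).continuousAt).continuousWithinAt)
    have := continuousOn_primitive_interval' hVintT (Set.left_mem_uIcc (a := s) (b := T))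
    rwa [Set.uIcc_of_le hsT] at this
  have hΨd : ∀ t ∈ Set.Ioo s T, HasDerivAt Ψ (e t + V t) t := by
    intro t ht
    have ht' : t ∈ Set.Icc s T := ⟨ht.1.le, ht.2.le⟩
    refine (hF t ht').add (integral_hasDerivAt_right (hVint t ht') ?_ (hVc t ht'))
    exact ContinuousAt.stronglyMeasurableAtFilter isOpen_Ioo
      (fun u hu => hVc u ⟨hu.1.le, hu.2.le⟩) t ht
  have hanti : AntitoneOn Ψ (Set.Icc s T) := by
    apply antitoneOn_of_deriv_nonpos (convex_Icc s T) hΨc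
    · intro t ht
      rw [interior_Icc] at ht
      exact ((hΨd t ht).differentiableAt).differentiableWithinAt
    · intro t ht
      rw [interior_Icc] at ht
      have ht' : t ∈ Set.Icc s T := ⟨ht.1.le, ht.2.le⟩
      rw [(hΨd t ht).deriv]
      linarith [he t ht']
  have := hanti (Set.left_mem_Icc.2 hsT) (Set.right_mem_Icc.2 hsT) hsT
  simp only [hΨ, intervalIntegral.integral_same, add_zero] at this
  linarith

private lemma phase_bound {V d : ℝ → ℝ} {c γ s T : ℝ} (hc : 0 < c) (hsT : s ≤ T)
    (hγ : γ ≠ 2)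
    (hV : ∀ t ∈ Set.Icc s T, HasDerivAt V (d t) t)
    (hVnn : ∀ t ∈ Set.Icc s T, 0 ≤ V t)
    (hd : ∀ t ∈ Set.Icc s T, d t ≤ -(c * V t ^ γ))
    (hok : ∀ t ∈ Set.Icc s T, V t ≠ 0 ∨ γ < 1) :
    (∫ t in s..T, V t) ≤ ((V s) ^ (2 - γ) - (V T) ^ (2 - γ)) / (c * (2 - γ)) := by
  have h2γ : (2 : ℝ) - γ ≠ 0 := sub_ne_zero.2 (Ne.symm hγ)
  have hcγ : c * (2 - γ) ≠ 0 := mul_ne_zero (ne_of_gt hc) h2γ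
  set F : ℝ → ℝ := fun t => (V t) ^ (2 - γ) / (c * (2 - γ)) with hFdef
  set e : ℝ → ℝ := fun t => (V t) ^ (1 - γ) * d t / c with hedef
  have hF : ∀ t ∈ Set.Icc s T, HasDerivAt F (e t) t := by
    intro t ht
    have hok' : V t ≠ 0 ∨ 1 ≤ 2 - γ := by
      rcases hok t ht with h | h
      · exact Or.inl h
      · exact Or.inr (by linarith)
    have hr := Real.hasDerivAt_rpow_const (p := 2 - γ) hok'
    have h := ((hr.comp t (hV t ht)).div_const (c * (2 - γ)))
    have heq : e t = (2 - γ) * V t ^ (2 - γ - 1) * d t / (c * (2 - γ)) := by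
      simp only [hedef]
      rw [show (2 : ℝ) - γ - 1 = 1 - γ by ring]
      field_simp
    rw [heq]
    exact h
  have he : ∀ t ∈ Set.Icc s T, e t ≤ - V t := by
    intro t ht
    rcases eq_or_lt_of_le (hVnn t ht) with h0 | hpos
    · have hγ1 : γ < 1 := (hok t ht).resolve_left (fun h => h h0.symm)
      simp only [hedef, ← h0]
      rw [Real.zero_rpow (by linarith : (1:ℝ) - γ ≠ 0)]
      simp
    · have h1 : (V t) ^ (1 - γ) * d t ≤ (V t) ^ (1 - γ) * (-(c * V t ^ γ)) :=
        mul_le_mul_of_nonneg_left (hd t ht) (Real.rpow_nonneg hpos.le _)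
      have h2 : (V t) ^ (1 - γ) * (V t) ^ γ = V t := by
        rw [← Real.rpow_add hpos, show (1 : ℝ) - γ + γ = 1 by ring, Real.rpow_one]
      simp only [hedef]
      rw [div_le_iff₀ hc] at *
      nlinarith [Real.rpow_nonneg hpos.le (1 - γ)]
  have := int_le_of_potential hsT hF (fun t ht => (hV t ht).continuousAt) he
  simpa [hFdef, div_sub_div_same] using this

set_option maxHeartbeats 1000000 in
/-- Theorem 3, regret bound: the static regret
`∫₀^T (f(x(t)) - f*) dt` of any solution of the FxTS-GF dynamics is bounded by
the constant `l1 + l2`, uniformly in `T ≥ 0`. -/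
theorem stmt_11 (n : ℕ) (f : EuclideanSpace ℝ (Fin n) → ℝ)
    (f' : EuclideanSpace ℝ (Fin n) → EuclideanSpace ℝ (Fin n))
    (hgrad : ∀ y, HasGradientAt f (f' y) y)
    (xstar : EuclideanSpace ℝ (Fin n)) (fstar μ : ℝ) (hμ : 0 < μ)
    (hfstar : f xstar = fstar) (hmin : ∀ y, fstar ≤ f y)
    (huniq : ∀ y, f y = fstar → y = xstar)
    (hPL : ∀ y, μ * (f y - fstar) ≤ (1 / 2) * ‖f' y‖ ^ 2)
    (c1 c2 p1 p2 : ℝ) (hc1 : 0 < c1) (hc2 : 0 < c2)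
    (hp1 : 2 < p1) (hp2 : p2 ∈ Set.Ioo (1 : ℝ) 2) (hp2' : p2 ≠ 4 / 3)
    (α β p q : ℝ)
    (hα : α = p1 / (2 * (p1 - 1))) (hβ : β = p2 / (2 * (p2 - 1)))
    (hpdef : p = c1 * (2 * μ) ^ α) (hqdef : q = c2 * (2 * μ) ^ β)
    (x : ℝ → EuclideanSpace ℝ (Fin n))
    (hx : ∀ t, 0 ≤ t → HasDerivAt x
      (if f' (x t) = 0 then 0 else
        -(c1 / ‖f' (x t)‖ ^ ((p1 - 2) / (p1 - 1))) • f' (x t)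
          - (c2 / ‖f' (x t)‖ ^ ((p2 - 2) / (p2 - 1))) • f' (x t)) t)
    (V0 l1 l2 : ℝ) (hV0 : V0 = f (x 0) - fstar) (hV0pos : 0 < V0)
    (hl1 : l1 = 1 / (p * (2 - α)))
    (hl2 : l2 = ((1 + V0 ^ (β - 1)) ^ ((β - 2) / (β - 1)) - 1) /
      (q * V0 ^ (β - 2) * (β - 2))) :
    ∀ T : ℝ, 0 ≤ T → (∫ t in (0 : ℝ)..T, (f (x t) - fstar)) ≤ l1 + l2 := by
  intro T hT
  -- parameter facts
  have hp11 : (0:ℝ) < p1 - 1 := by linarith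
  have hp21 : (0:ℝ) < p2 - 1 := by linarith [hp2.1]
  have hα0 : 0 < α := by rw [hα]; positivity
  have hα1 : α < 1 := by
    rw [hα, div_lt_one (by linarith)]; linarith
  have hβ1 : 1 < β := by
    rw [hβ, lt_div_iff₀ (by linarith)]; linarith [hp2.2]
  have hβ2 : β ≠ 2 := by
    rw [hβ]
    intro h
    rw [div_eq_iff (by linarith : 2 * (p2 - 1) ≠ 0)] at h
    apply hp2'
    linarith
  have h2μ : (0:ℝ) < 2 * μ := by linarith
  have hppos : 0 < p := by rw [hpdef]; positivity
  have hqpos : 0 < q := by rw [hqdef]; positivity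
  have h2α : (0:ℝ) < 2 - α := by linarith
  have hl1nn : 0 ≤ l1 := by rw [hl1]; positivity
  -- the value function
  set V : ℝ → ℝ := fun t => f (x t) - fstar with hVdef
  have hVnn : ∀ t, 0 ≤ V t := fun t => by simp [hVdef, sub_nonneg, hmin (x t)]
  set d : ℝ → ℝ := fun t => if f' (x t) = 0 then 0 else
    -(c1 * ‖f' (x t)‖ ^ (2 * α) + c2 * ‖f' (x t)‖ ^ (2 * β)) with hddef
  have key : ∀ t, 0 ≤ t → HasDerivAt V (d t) t ∧ d t ≤ -(p * V t ^ α + q * V t ^ β) := by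
    intro t ht
    have hcomp := (hgrad (x t)).hasFDerivAt.comp_hasDerivAt t (hx t ht)
    by_cases hg : f' (x t) = 0
    · have hVt : V t = 0 := by
        have h1 := hPL (x t)
        rw [hg] at h1
        simp only [norm_zero, ne_eq] at h1
        have h2 := hmin (x t)
        have h3 : f (x t) - fstar = 0 := by nlinarith
        simp [hVdef, h3]
      constructor
      · have : HasDerivAt (fun s => f (x s)) 0 t := by
          exact (by simpa [hg] using hcomp : HasDerivAt (f ∘ x) 0 t)
        simpa [hddef, hg, hVdef] using this.sub_const fstar
      · simp [hddef, hg, hVt, Real.zero_rpow (ne_of_gt hα0),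
          Real.zero_rpow (by positivity : β ≠ 0)]
    · set g := f' (x t) with hgdef
      have hr : (0:ℝ) < ‖g‖ := norm_pos_iff.2 hg
      have he1 : 2 * α = 2 - (p1 - 2) / (p1 - 1) := by
        rw [hα]; field_simp; ring
      have he2 : 2 * β = 2 - (p2 - 2) / (p2 - 1) := by
        rw [hβ]; field_simp; ring
      have hA1 : ‖g‖ ^ (2 * α) = ‖g‖ ^ 2 / ‖g‖ ^ ((p1 - 2) / (p1 - 1)) := by
        rw [he1, Real.rpow_sub hr, Real.rpow_two]
      have hA2 : ‖g‖ ^ (2 * β) = ‖g‖ ^ 2 / ‖g‖ ^ ((p2 - 2) / (p2 - 1)) := by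
        rw [he2, Real.rpow_sub hr, Real.rpow_two]
      have hD : HasDerivAt V (d t) t := by
        have h1 : HasDerivAt (fun s => f (x s))
            (inner ℝ g (-(c1 / ‖g‖ ^ ((p1 - 2) / (p1 - 1))) • g
              - (c2 / ‖g‖ ^ ((p2 - 2) / (p2 - 1))) • g) : ℝ) t := by
          exact (by simpa [hg, InnerProductSpace.toDual_apply_apply] using hcomp :
            HasDerivAt (f ∘ x) (inner ℝ g (-(c1 / ‖g‖ ^ ((p1 - 2) / (p1 - 1))) • g
              - (c2 / ‖g‖ ^ ((p2 - 2) / (p2 - 1))) • g) : ℝ) t)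
        have h2 : (inner ℝ g (-(c1 / ‖g‖ ^ ((p1 - 2) / (p1 - 1))) • g
              - (c2 / ‖g‖ ^ ((p2 - 2) / (p2 - 1))) • g) : ℝ) = d t := by
          rw [inner_sub_right, real_inner_smul_right, real_inner_smul_right,
            real_inner_self_eq_norm_sq]
          simp only [hddef, if_neg hg, ← hgdef, hA1, hA2]
          field_simp
          ring
        rw [← h2]
        simpa [hVdef] using h1.sub_const fstar
      refine ⟨hD, ?_⟩
      have hPL' : 2 * μ * V t ≤ ‖g‖ ^ 2 := by
        have := hPL (x t)
        simp only [hVdef, ← hgdef] at *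
        linarith
      have hcmp : ∀ γ : ℝ, 0 < γ → (2 * μ) ^ γ * V t ^ γ ≤ ‖g‖ ^ (2 * γ) := by
        intro γ hγ
        have h1 : ‖g‖ ^ (2 * γ) = (‖g‖ ^ 2) ^ γ := by
          rw [← Real.rpow_two, ← Real.rpow_mul (norm_nonneg g)]
        have h2 : (2 * μ * V t) ^ γ ≤ (‖g‖ ^ 2) ^ γ :=
          Real.rpow_le_rpow (mul_nonneg h2μ.le (hVnn t)) hPL' hγ.le
        rw [Real.mul_rpow (by positivity) (hVnn t)] at h2
        rw [h1]; exact h2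
      have hc1' := hcmp α hα0
      have hc2' := hcmp β (by positivity)
      have hb1 : p * V t ^ α ≤ c1 * ‖g‖ ^ (2 * α) := by
        rw [hpdef, mul_assoc]
        exact mul_le_mul_of_nonneg_left hc1' hc1.le
      have hb2 : q * V t ^ β ≤ c2 * ‖g‖ ^ (2 * β) := by
        rw [hqdef, mul_assoc]
        exact mul_le_mul_of_nonneg_left hc2' hc2.le
      simp only [hddef, if_neg hg, ← hgdef]
      linarith
  have hdle : ∀ t, 0 ≤ t → d t ≤ -(p * V t ^ α + q * V t ^ β) := fun t ht => (key t ht).2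
  have hdnp : ∀ t, 0 ≤ t → d t ≤ 0 := by
    intro t ht
    have := hdle t ht
    have h1 : 0 ≤ p * V t ^ α := mul_nonneg hppos.le (Real.rpow_nonneg (hVnn t) _)
    have h2 : 0 ≤ q * V t ^ β := mul_nonneg hqpos.le (Real.rpow_nonneg (hVnn t) _)
    linarith
  -- V is antitone on [0, T]
  have hmono : AntitoneOn V (Set.Icc 0 T) := by
    apply antitoneOn_of_deriv_nonpos (convex_Icc 0 T)
    · exact fun t ht => ((key t ht.1).1.continuousAt).continuousWithinAt
    · intro t ht
      rw [interior_Icc] at ht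
      exact ((key t ht.1.le).1.differentiableAt).differentiableWithinAt
    · intro t ht
      rw [interior_Icc] at ht
      rw [(key t ht.1.le).1.deriv]
      exact hdnp t ht.1.le
  have hV00 : V 0 = V0 := by simp [hVdef, hV0]
  -- l2 rewriting
  set Aq : ℝ := (V0 ^ (1 - β) + 1) ^ ((β - 2) / (β - 1)) with hAq
  have hV0β : V0 ^ (2 - β) = (V0 ^ (1 - β)) ^ ((β - 2) / (β - 1)) := by
    have hβ1' : β - 1 ≠ 0 := by linarith
    have hexp : (1 - β) * ((β - 2) / (β - 1)) = 2 - β := by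
      field_simp
      ring
    rw [← Real.rpow_mul hV0pos.le, hexp]
  have hl2' : l2 = (V0 ^ (2 - β) - Aq) / (q * (2 - β)) := by
    have hX : V0 ^ (2 - β) * (1 + V0 ^ (β - 1)) ^ ((β - 2) / (β - 1)) = Aq := by
      rw [hV0β, hAq, ← Real.mul_rpow (Real.rpow_nonneg hV0pos.le _) (by positivity)]
      congr 1
      rw [mul_add, mul_one, ← Real.rpow_add hV0pos]
      simp
    have hV0b : V0 ^ (β - 2) * V0 ^ (2 - β) = 1 := by
      rw [← Real.rpow_add hV0pos]; simp
    have hne1 : q * V0 ^ (β - 2) * (β - 2) ≠ 0 :=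
      mul_ne_zero (mul_ne_zero (ne_of_gt hqpos)
        (ne_of_gt (Real.rpow_pos_of_pos hV0pos _))) (sub_ne_zero.2 hβ2)
    have hne2 : q * (2 - β) ≠ 0 :=
      mul_ne_zero (ne_of_gt hqpos) (sub_ne_zero.2 (Ne.symm hβ2))
    rw [hl2, ← hX, div_eq_div_iff hne1 hne2]
    linear_combination (q * (β - 2) *
      ((1 + V0 ^ (β - 1)) ^ ((β - 2) / (β - 1)) - 1)) * hV0b
  -- sign facts about l2 and L2
  have hbase1 : (1:ℝ) ≤ V0 ^ (1 - β) + 1 := by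
    have := Real.rpow_pos_of_pos hV0pos (1 - β)
    linarith
  have hl2nn : 0 ≤ l2 := by
    rw [hl2', hV0β]
    rcases lt_or_gt_of_ne hβ2 with hb | hb
    · have hA : Aq ≤ (V0 ^ (1 - β)) ^ ((β - 2) / (β - 1)) := by
        rw [hAq]
        exact Real.rpow_le_rpow_of_nonpos (Real.rpow_pos_of_pos hV0pos _)
          (by linarith) (div_nonpos_iff.2 (Or.inr ⟨by linarith, by linarith⟩))
      exact div_nonneg (by linarith) (by nlinarith)
    · have hA : (V0 ^ (1 - β)) ^ ((β - 2) / (β - 1)) ≤ Aq := by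
        rw [hAq]
        exact Real.rpow_le_rpow (Real.rpow_nonneg hV0pos.le _)
          (by linarith) (div_nonneg (by linarith) (by linarith))
      exact div_nonneg_iff.2 (Or.inr ⟨by linarith, by nlinarith⟩)
  set L2 : ℝ := (V0 ^ (2 - β) - 1) / (q * (2 - β)) with hL2def
  have hLl2 : L2 ≤ l2 := by
    have hdiff : l2 - L2 = (1 - Aq) / (q * (2 - β)) := by
      rw [hl2', hL2def, div_sub_div_same]
      ring_nf
    have : 0 ≤ (1 - Aq) / (q * (2 - β)) := by
      rcases lt_or_gt_of_ne hβ2 with hb | hb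
      · have hA : Aq ≤ 1 := Real.rpow_le_one_of_one_le_of_nonpos hbase1
          (div_nonpos_iff.2 (Or.inr ⟨by linarith, by linarith⟩))
        exact div_nonneg (by linarith) (by nlinarith)
      · have hA : (1:ℝ) ≤ Aq := Real.one_le_rpow hbase1
          (div_nonneg (by linarith) (by linarith))
        exact div_nonneg_iff.2 (Or.inr ⟨by linarith, by nlinarith⟩)
    linarith
  have hVcont : ContinuousOn V (Set.Icc 0 T) :=
    fun t ht => ((key t ht.1).1.continuousAt).continuousWithinAt
  -- phase bounds, specialized
  have phaseα : ∀ s : ℝ, 0 ≤ s → s ≤ T →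
      (∫ t in s..T, V t) ≤ ((V s) ^ (2 - α) - (V T) ^ (2 - α)) / (p * (2 - α)) := by
    intro s hs hsT
    apply phase_bound hppos hsT (by linarith)
      (fun t ht => (key t (le_trans hs ht.1)).1) (fun t _ => hVnn t)
    · intro t ht
      have h1 := hdle t (le_trans hs ht.1)
      have h2 : 0 ≤ q * V t ^ β := mul_nonneg hqpos.le (Real.rpow_nonneg (hVnn t) _)
      linarith
    · exact fun t _ => Or.inr hα1
  have phaseβ : ∀ s' : ℝ, 0 ≤ s' → s' ≤ T → (∀ t ∈ Set.Icc (0:ℝ) s', 1 ≤ V t) →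
      (∫ t in (0:ℝ)..s', V t) ≤ ((V 0) ^ (2 - β) - (V s') ^ (2 - β)) / (q * (2 - β)) := by
    intro s' hs' hs'T hone
    apply phase_bound hqpos hs' hβ2
      (fun t ht => (key t ht.1).1) (fun t _ => hVnn t)
    · intro t ht
      have h1 := hdle t ht.1
      have h2 : 0 ≤ p * V t ^ α := mul_nonneg hppos.le (Real.rpow_nonneg (hVnn t) _)
      linarith
    · intro t ht
      exact Or.inl (by have := hone t ht; intro h0; rw [h0] at this; linarith)
  show (∫ t in (0:ℝ)..T, V t) ≤ l1 + l2
  rcases le_or_gt V0 1 with hsmall | hbig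
  · -- V0 ≤ 1 : only the α phase is needed
    have h := phaseα 0 le_rfl hT
    rw [hV00] at h
    have h1 : V0 ^ (2 - α) ≤ 1 := Real.rpow_le_one hV0pos.le hsmall (by linarith)
    have h2 : 0 ≤ (V T) ^ (2 - α) := Real.rpow_nonneg (hVnn T) _
    have hid : 1 / (p * (2 - α)) - (V0 ^ (2 - α) - (V T) ^ (2 - α)) / (p * (2 - α)) =
        (1 - V0 ^ (2 - α) + (V T) ^ (2 - α)) / (p * (2 - α)) := by
      rw [div_sub_div_same]; ring_nf
    have h4 : 0 ≤ (1 - V0 ^ (2 - α) + (V T) ^ (2 - α)) / (p * (2 - α)) :=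
      div_nonneg (by linarith) (by positivity)
    rw [hl1] at *
    linarith
  · rcases le_or_gt 1 (V T) with hTV | hTV
    · -- V stays ≥ 1 on [0, T]
      have hone : ∀ t ∈ Set.Icc (0:ℝ) T, 1 ≤ V t := by
        intro t ht
        exact le_trans hTV (hmono ht (Set.right_mem_Icc.2 hT) ht.2)
      have h := phaseβ T hT le_rfl hone
      rw [hV00] at h
      have hend : (V0 ^ (2 - β) - (V T) ^ (2 - β)) / (q * (2 - β)) ≤ L2 := by
        rw [hL2def]
        have hid : (V0 ^ (2 - β) - 1) / (q * (2 - β)) -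
            (V0 ^ (2 - β) - (V T) ^ (2 - β)) / (q * (2 - β)) =
            ((V T) ^ (2 - β) - 1) / (q * (2 - β)) := by
          rw [div_sub_div_same]; ring_nf
        have hnn : 0 ≤ ((V T) ^ (2 - β) - 1) / (q * (2 - β)) := by
          rcases lt_or_gt_of_ne hβ2 with hb | hb
          · have := Real.one_le_rpow hTV (by linarith : (0:ℝ) ≤ 2 - β)
            exact div_nonneg (by linarith) (by nlinarith)
          · have := Real.rpow_le_one_of_one_le_of_nonpos hTV
              (by linarith : 2 - β ≤ 0)
            exact div_nonneg_iff.2 (Or.inr ⟨by linarith, by nlinarith⟩)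
        linarith
      linarith
    · -- V crosses 1 at some t1
      obtain ⟨t1, ht1, hVt1⟩ : ∃ t1 ∈ Set.Icc (0:ℝ) T, V t1 = 1 := by
        have hsub := intermediate_value_Icc' hT hVcont
        have : (1:ℝ) ∈ Set.Icc (V T) (V 0) := ⟨hTV.le, by rw [hV00]; exact hbig.le⟩
        obtain ⟨t1, ht1, h⟩ := hsub this
        exact ⟨t1, ht1, h⟩
      have hone : ∀ t ∈ Set.Icc (0:ℝ) t1, 1 ≤ V t := by
        intro t ht
        have : V t1 ≤ V t := hmono ⟨ht.1, le_trans ht.2 ht1.2⟩ ht1 ht.2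
        rw [hVt1] at this; linarith
      have hint1 : IntervalIntegrable V MeasureTheory.volume 0 t1 := by
        apply ContinuousOn.intervalIntegrable
        refine hVcont.mono ?_
        rw [Set.uIcc_of_le ht1.1]
        exact fun z hz => ⟨hz.1, le_trans hz.2 ht1.2⟩
      have hint2 : IntervalIntegrable V MeasureTheory.volume t1 T := by
        apply ContinuousOn.intervalIntegrable
        refine hVcont.mono ?_
        rw [Set.uIcc_of_le ht1.2]
        exact fun z hz => ⟨le_trans ht1.1 hz.1, hz.2⟩
      rw [← intervalIntegral.integral_add_adjacent_intervals hint1 hint2]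
      have hI1 : (∫ t in (0:ℝ)..t1, V t) ≤ L2 := by
        have h := phaseβ t1 ht1.1 ht1.2 hone
        rw [hV00, hVt1, Real.one_rpow] at h
        exact h
      have hI2 : (∫ t in t1..T, V t) ≤ l1 := by
        have h := phaseα t1 ht1.1 ht1.2
        rw [hVt1, Real.one_rpow] at h
        have h2 : 0 ≤ (V T) ^ (2 - α) := Real.rpow_nonneg (hVnn T) _
        have hid : 1 / (p * (2 - α)) - (1 - (V T) ^ (2 - α)) / (p * (2 - α)) =
            (V T) ^ (2 - α) / (p * (2 - α)) := by
          rw [div_sub_div_same]; ring_nf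
        have : 0 ≤ (V T) ^ (2 - α) / (p * (2 - α)) := div_nonneg h2 (by positivity)
        rw [hl1]
        linarith
      linarith
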